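/- In module Elect, if the module runs for at least c_0 log_2 n epochs, then with probability at least 1 − n^{2 − c_0} at most one node remains a candidate at the end: for any two distinct nodes u, v, the probability that both still have candidate = 1 after c_0 log_2 n epochs is at most n^{−c_0}. -/

import Mathlib

set_option autoImplicit false

open MeasureTheory ProbabilityTheory
open scoped ENNReal

/-- Two independent fair coins agree with probability 1/2. -/
lemma coins_agree {Ω : Type} [MeasurableSpace Ω] (μ : Measure Ω) [IsProbabilityMeasure μ]
    (X Y : Ω → Bool) (hX : Measurable X) (hY : Measurable Y)
    (hXY : IndepFun X Y μ)
    (hX2 : μ {ω | X ω = true} = 1 / 2) (hY2 : μ {ω | Y ω = true} = 1 / 2) :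
    μ {ω | X ω = Y ω} = 1 / 2 := by
  have half : ∀ (Z : Ω → Bool), Measurable Z → μ {ω | Z ω = true} = 1 / 2 →
      μ {ω | Z ω = false} = 1 / 2 := by
    intro Z hZ hZ2
    have hc : {ω | Z ω = false} = (Z ⁻¹' {true})ᶜ := by
      ext ω; cases h : Z ω <;> simp [h]
    have hpre : Z ⁻¹' {true} = {ω | Z ω = true} := rfl
    rw [hc, measure_compl (hZ (measurableSet_singleton true)) (measure_ne_top μ _),
      measure_univ, hpre, hZ2, one_div, ENNReal.one_sub_inv_two]
  have hXf : μ {ω | X ω = false} = 1 / 2 := half X hX hX2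
  have hYf : μ {ω | Y ω = false} = 1 / 2 := half Y hY hY2
  have hsplit : {ω | X ω = Y ω} =
      (X ⁻¹' {true} ∩ Y ⁻¹' {true}) ∪ (X ⁻¹' {false} ∩ Y ⁻¹' {false}) := by
    ext ω
    cases hx : X ω <;> cases hy : Y ω <;> simp [hx, hy]
  have hdisj : Disjoint (X ⁻¹' {true} ∩ Y ⁻¹' {true})
      (X ⁻¹' {false} ∩ Y ⁻¹' {false}) := by
    rw [Set.disjoint_left]
    rintro ω ⟨h1, _⟩ ⟨h2, _⟩
    simp only [Set.mem_preimage, Set.mem_singleton_iff] at h1 h2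
    rw [h1] at h2; exact Bool.noConfusion h2
  have hm1 : MeasurableSet (X ⁻¹' {true} ∩ Y ⁻¹' {true}) :=
    (hX (measurableSet_singleton _)).inter (hY (measurableSet_singleton _))
  have hm2 : MeasurableSet (X ⁻¹' {false} ∩ Y ⁻¹' {false}) :=
    (hX (measurableSet_singleton _)).inter (hY (measurableSet_singleton _))
  have e1 : μ (X ⁻¹' {true} ∩ Y ⁻¹' {true}) = (1 / 2) * (1 / 2) := by
    rw [hXY.measure_inter_preimage_eq_mul _ _ (measurableSet_singleton _)
      (measurableSet_singleton _)]
    have : X ⁻¹' {true} = {ω | X ω = true} := by ext ω; simp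
    have h2 : Y ⁻¹' {true} = {ω | Y ω = true} := by ext ω; simp
    rw [this, h2, hX2, hY2]
  have e2 : μ (X ⁻¹' {false} ∩ Y ⁻¹' {false}) = (1 / 2) * (1 / 2) := by
    rw [hXY.measure_inter_preimage_eq_mul _ _ (measurableSet_singleton _)
      (measurableSet_singleton _)]
    have : X ⁻¹' {false} = {ω | X ω = false} := by ext ω; simp
    have h2 : Y ⁻¹' {false} = {ω | Y ω = false} := by ext ω; simp
    rw [this, h2, hXf, hYf]
  rw [hsplit, measure_union hdisj hm2, e1, e2, ← two_mul, one_div, ← mul_assoc,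
    ENNReal.mul_inv_cancel two_ne_zero (by norm_num), one_mul]

/-- The probability that two distinct nodes' coins agree in every epoch `i < τ`
is `(1/2)^τ`. -/
lemma coins_agree_all {Ω : Type} [MeasurableSpace Ω] (μ : Measure Ω) [IsProbabilityMeasure μ]
    (n : ℕ) (C : Fin n → ℕ → Ω → Bool)
    (hmeas : ∀ v i, Measurable (C v i))
    (hindep : iIndepFun
      (fun p : Fin n × ℕ => fun ω => C p.1 p.2 ω) μ)
    (hfair : ∀ v i, μ {ω | C v i ω = true} = 1 / 2)
    (u v : Fin n) (huv : u ≠ v) (τ : ℕ) :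
    μ (⋂ i ∈ Finset.range τ, {ω | C u i ω = C v i ω}) = (1 / 2 : ℝ≥0∞) ^ τ := by
  classical
  induction τ with
  | zero => simp
  | succ k ih =>
    set S : Finset (Fin n × ℕ) := ({u, v} : Finset (Fin n)) ×ˢ Finset.range k with hS
    set T : Finset (Fin n × ℕ) := ({u, v} : Finset (Fin n)) ×ˢ {k} with hT
    have hST : Disjoint S T := by
      rw [Finset.disjoint_left]
      rintro ⟨w, i⟩ hS' hT'
      simp only [hS, hT, Finset.mem_product, Finset.mem_range, Finset.mem_singleton] at hS' hT'
      omega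
    have hIF : IndepFun (fun ω (p : S) => C p.1.1 p.1.2 ω)
        (fun ω (p : T) => C p.1.1 p.1.2 ω) μ :=
      hindep.indepFun_finset S T hST (fun p => hmeas _ _)
    -- membership facts
    have hmemu : ∀ i, i < k → ((u, i) : Fin n × ℕ) ∈ S := by
      intro i hi
      simp [hS, Finset.mem_product, hi]
    have hmemv : ∀ i, i < k → ((v, i) : Fin n × ℕ) ∈ S := by
      intro i hi
      simp [hS, Finset.mem_product, hi]
    have hmuT : ((u, k) : Fin n × ℕ) ∈ T := by simp [hT, Finset.mem_product]
    have hmvT : ((v, k) : Fin n × ℕ) ∈ T := by simp [hT, Finset.mem_product]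
    -- boolean functions
    set φ : ((p : S) → Bool) → Bool :=
      fun g => decide (∀ i (hi : i < k), g ⟨(u, i), hmemu i hi⟩ = g ⟨(v, i), hmemv i hi⟩)
        with hφ
    set ψ : ((p : T) → Bool) → Bool :=
      fun g => decide (g ⟨(u, k), hmuT⟩ = g ⟨(v, k), hmvT⟩) with hψ
    have hIF2 : IndepFun (fun ω => φ (fun p : S => C p.1.1 p.1.2 ω))
        (fun ω => ψ (fun p : T => C p.1.1 p.1.2 ω)) μ :=
      hIF.comp (measurable_of_countable φ) (measurable_of_countable ψ)
    have hpre1 : ((fun ω => φ (fun p : S => C p.1.1 p.1.2 ω)) ⁻¹' {true}) =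
        ⋂ i ∈ Finset.range k, {ω | C u i ω = C v i ω} := by
      ext ω
      simp only [Set.mem_preimage, Set.mem_singleton_iff, hφ, decide_eq_true_eq,
        Set.mem_iInter, Finset.mem_range, Set.mem_setOf_eq]
    have hpre2 : ((fun ω => ψ (fun p : T => C p.1.1 p.1.2 ω)) ⁻¹' {true}) =
        {ω | C u k ω = C v k ω} := by
      ext ω
      simp only [Set.mem_preimage, Set.mem_singleton_iff, hψ, decide_eq_true_eq,
        Set.mem_setOf_eq]
    have hsplit : (⋂ i ∈ Finset.range (k + 1), {ω | C u i ω = C v i ω}) =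
        (⋂ i ∈ Finset.range k, {ω | C u i ω = C v i ω}) ∩ {ω | C u k ω = C v k ω} := by
      ext ω
      simp only [Set.mem_iInter, Finset.mem_range, Set.mem_inter_iff, Set.mem_setOf_eq]
      constructor
      · intro h; exact ⟨fun i hi => h i (by omega), h k (by omega)⟩
      · rintro ⟨h1, h2⟩ i hi
        rcases Nat.lt_succ_iff_lt_or_eq.mp hi with h | h
        · exact h1 i h
        · subst h; exact h2
    have hCuvk : IndepFun (C u k) (C v k) μ := by
      have := hindep.indepFun (i := (u, k)) (j := (v, k))
        (by simp [Prod.ext_iff, huv])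
      exact this
    have hAk : μ {ω | C u k ω = C v k ω} = 1 / 2 :=
      coins_agree μ (C u k) (C v k) (hmeas u k) (hmeas v k) hCuvk (hfair u k) (hfair v k)
    calc μ (⋂ i ∈ Finset.range (k + 1), {ω | C u i ω = C v i ω})
        = μ (((fun ω => φ (fun p : S => C p.1.1 p.1.2 ω)) ⁻¹' {true}) ∩
            ((fun ω => ψ (fun p : T => C p.1.1 p.1.2 ω)) ⁻¹' {true})) := by
          rw [hpre1, hpre2, hsplit]
      _ = μ ((fun ω => φ (fun p : S => C p.1.1 p.1.2 ω)) ⁻¹' {true}) *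
            μ ((fun ω => ψ (fun p : T => C p.1.1 p.1.2 ω)) ⁻¹' {true}) :=
          hIF2.measure_inter_preimage_eq_mul _ _ (measurableSet_singleton _)
            (measurableSet_singleton _)
      _ = (1 / 2 : ℝ≥0∞) ^ k * (1 / 2) := by rw [hpre1, hpre2, ih, hAk]
      _ = (1 / 2 : ℝ≥0∞) ^ (k + 1) := by rw [pow_succ]

/-- in module Elect with `n` nodes and independent fair coins
`C v i` (the coin of node `v` in epoch `i`), where all nodes start as candidates and a
candidate `v` resets its candidate bit in epoch `i` iff `C v i = false` while some
candidate `u` has `C u i = true`: for any two distinct nodes `u, v`, the probability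
that both are still candidates after `τ ≥ c₀ log₂ n` epochs is at most `n^{-c₀}`,
and with probability at least `1 - n^{2 - c₀}` at most one candidate remains. -/
theorem stmt_18 {Ω : Type} [MeasurableSpace Ω] (μ : Measure Ω) [IsProbabilityMeasure μ]
    (n : ℕ) (hn : 2 ≤ n)
    (C : Fin n → ℕ → Ω → Bool)
    (hmeas : ∀ v i, Measurable (C v i))
    (hindep : iIndepFun
      (fun p : Fin n × ℕ => fun ω => C p.1 p.2 ω) μ)
    (hfair : ∀ v i, μ {ω | C v i ω = true} = 1 / 2)
    (cand : ℕ → Fin n → Ω → Prop)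
    (hcand0 : ∀ v ω, cand 0 v ω)
    (hcandS : ∀ i v ω, cand (i + 1) v ω ↔
      cand i v ω ∧ ¬ (C v i ω = false ∧ ∃ u, cand i u ω ∧ C u i ω = true))
    (c0 : ℝ) (τ : ℕ) (hτ : c0 * Real.logb 2 n ≤ τ) :
    (∀ u v : Fin n, u ≠ v →
      μ {ω | cand τ u ω ∧ cand τ v ω} ≤ ENNReal.ofReal ((n : ℝ) ^ (-c0))) ∧
    μ {ω | ∃ u v : Fin n, u ≠ v ∧ cand τ u ω ∧ cand τ v ω} ≤
      ENNReal.ofReal ((n : ℝ) ^ (2 - c0)) := by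
  classical
  -- candidacy is antitone in time
  have cand_mono : ∀ i j (v : Fin n) (ω : Ω), i ≤ j → cand j v ω → cand i v ω := by
    intro i j
    induction j with
    | zero => intro v ω hij h; obtain rfl := Nat.le_zero.mp hij; exact h
    | succ k ih =>
      intro v ω hij h
      by_cases hik : i = k + 1
      · exact hik ▸ h
      · exact ih v ω (by omega) ((hcandS k v ω).mp h).1
  -- key inclusion: if both candidates at τ, their coins agreed in all epochs < τ
  have hsub : ∀ u v : Fin n, {ω | cand τ u ω ∧ cand τ v ω} ⊆
      ⋂ i ∈ Finset.range τ, {ω | C u i ω = C v i ω} := by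
    intro u v ω hω
    simp only [Set.mem_setOf_eq] at hω
    obtain ⟨hu, hv⟩ := hω
    simp only [Set.mem_iInter, Finset.mem_range, Set.mem_setOf_eq]
    intro i hi
    have hu1 : cand (i + 1) u ω := cand_mono (i + 1) τ u ω (by omega) hu
    have hv1 : cand (i + 1) v ω := cand_mono (i + 1) τ v ω (by omega) hv
    have hui : cand i u ω := ((hcandS i u ω).mp hu1).1
    have hvi : cand i v ω := ((hcandS i v ω).mp hv1).1
    by_contra hne
    cases hcu : C u i ω <;> cases hcv : C v i ω
    · exact hne (by rw [hcu, hcv])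
    · exact ((hcandS i u ω).mp hu1).2 ⟨hcu, v, hvi, hcv⟩
    · exact ((hcandS i v ω).mp hv1).2 ⟨hcv, u, hui, hcu⟩
    · exact hne (by rw [hcu, hcv])
  have hnpos : (0 : ℝ) < (n : ℝ) := by positivity
  -- numeric bound : (1/2)^τ ≤ n^(-c0)
  have hnum : ((1 : ℝ) / 2) ^ τ ≤ (n : ℝ) ^ (-c0) := by
    have h1 : ((1 : ℝ) / 2) ^ τ = (2 : ℝ) ^ (-(τ : ℝ)) := by
      rw [one_div, inv_pow, ← Real.rpow_natCast (2 : ℝ) τ,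
        ← Real.rpow_neg (by norm_num : (0:ℝ) ≤ 2)]
    have h2 : (2 : ℝ) ^ (-(c0 * Real.logb 2 (n : ℝ))) = (n : ℝ) ^ (-c0) := by
      rw [show -(c0 * Real.logb 2 (n : ℝ)) = Real.logb 2 (n : ℝ) * (-c0) by ring,
        Real.rpow_mul (by norm_num : (0:ℝ) ≤ 2),
        Real.rpow_logb (by norm_num) (by norm_num) hnpos]
    rw [h1, ← h2]
    exact Real.rpow_le_rpow_of_exponent_le (by norm_num) (by linarith)
  -- part 1
  have part1 : ∀ u v : Fin n, u ≠ v →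
      μ {ω | cand τ u ω ∧ cand τ v ω} ≤ ENNReal.ofReal ((n : ℝ) ^ (-c0)) := by
    intro u v huv
    calc μ {ω | cand τ u ω ∧ cand τ v ω}
        ≤ μ (⋂ i ∈ Finset.range τ, {ω | C u i ω = C v i ω}) := measure_mono (hsub u v)
      _ = (1 / 2 : ℝ≥0∞) ^ τ := coins_agree_all μ n C hmeas hindep hfair u v huv τ
      _ = ENNReal.ofReal (((1 : ℝ) / 2) ^ τ) := by
          rw [ENNReal.ofReal_pow (by norm_num),
            show ENNReal.ofReal ((1:ℝ)/2) = 1 / 2 by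
              rw [one_div, one_div, ENNReal.ofReal_inv_of_pos (by norm_num),
                ENNReal.ofReal_ofNat]]
      _ ≤ ENNReal.ofReal ((n : ℝ) ^ (-c0)) := ENNReal.ofReal_le_ofReal hnum
  refine ⟨part1, ?_⟩
  -- union bound
  set F := (Finset.univ : Finset (Fin n × Fin n)).filter (fun p => p.1 ≠ p.2) with hF
  have hsub2 : {ω | ∃ u v : Fin n, u ≠ v ∧ cand τ u ω ∧ cand τ v ω} ⊆
      ⋃ p ∈ F, {ω | cand τ p.1 ω ∧ cand τ p.2 ω} := by
    rintro ω ⟨u, v, huv, hu, hv⟩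
    have hp : ((u, v) : Fin n × Fin n) ∈ F := by simp [hF, huv]
    exact Set.mem_biUnion hp
      (show ω ∈ {ω | cand τ ((u,v) : Fin n × Fin n).1 ω ∧
        cand τ ((u,v) : Fin n × Fin n).2 ω} from ⟨hu, hv⟩)
  have hcard : (F.card : ℝ) ≤ (n : ℝ) ^ (2 : ℕ) := by
    have : F.card ≤ (Finset.univ : Finset (Fin n × Fin n)).card := Finset.card_filter_le _ _
    simp only [Finset.card_univ, Fintype.card_prod, Fintype.card_fin] at this
    have h2 : F.card ≤ n ^ 2 := by rw [pow_two]; exact this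
    exact_mod_cast h2
  calc μ {ω | ∃ u v : Fin n, u ≠ v ∧ cand τ u ω ∧ cand τ v ω}
       ≤ μ (⋃ p ∈ F, {ω | cand τ p.1 ω ∧ cand τ p.2 ω}) := measure_mono hsub2
     _ ≤ ∑ p ∈ F, μ {ω | cand τ p.1 ω ∧ cand τ p.2 ω} := measure_biUnion_finset_le F _
     _ ≤ ∑ _p ∈ F, ENNReal.ofReal ((n : ℝ) ^ (-c0)) := by
        refine Finset.sum_le_sum ?_
        intro p hp
        simp only [hF, Finset.mem_filter] at hp
        exact part1 p.1 p.2 hp.2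
     _ = F.card * ENNReal.ofReal ((n : ℝ) ^ (-c0)) := by
        rw [Finset.sum_const, nsmul_eq_mul]
     _ = ENNReal.ofReal ((F.card : ℝ) * (n : ℝ) ^ (-c0)) := by
        rw [ENNReal.ofReal_mul (by positivity)]
        simp
     _ ≤ ENNReal.ofReal ((n : ℝ) ^ (2 : ℕ) * (n : ℝ) ^ (-c0)) := by
        apply ENNReal.ofReal_le_ofReal
        apply mul_le_mul_of_nonneg_right hcard (by positivity)
     _ = ENNReal.ofReal ((n : ℝ) ^ (2 - c0)) := by
        congr 1
        rw [← Real.rpow_natCast (n : ℝ) 2, ← Real.rpow_add hnpos]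
        norm_num [sub_eq_add_neg]
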